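/- Let G be a connected simple graph on an even number n of vertices, where n ≥ 10 or n = 4. If the number of edges of G exceeds C(n−2, 2) + 2, then G has a perfect matching. -/

import Mathlib

open SimpleGraph

namespace OEdgeAux

variable {V : Type*}

open Finset SimpleGraph.Subgraph

/-! ### Partner function of a perfect matching -/

noncomputable def pmF {Γ : SimpleGraph V} {M : Γ.Subgraph}
    (hM : M.IsPerfectMatching) (v : V) : V :=
  (Subgraph.isPerfectMatching_iff.mp hM v).choose

lemma pmF_adj {Γ : SimpleGraph V} {M : Γ.Subgraph} (hM : M.IsPerfectMatching) (v : V) :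
    M.Adj v (pmF hM v) :=
  (Subgraph.isPerfectMatching_iff.mp hM v).choose_spec.1

lemma eq_pmF {Γ : SimpleGraph V} {M : Γ.Subgraph} (hM : M.IsPerfectMatching) {v w : V}
    (h : M.Adj v w) : w = pmF hM v :=
  (Subgraph.isPerfectMatching_iff.mp hM v).choose_spec.2 w h

lemma pmF_pmF {Γ : SimpleGraph V} {M : Γ.Subgraph} (hM : M.IsPerfectMatching) (v : V) :
    pmF hM (pmF hM v) = v :=
  (eq_pmF hM (pmF_adj hM v).symm).symm

lemma pmF_injective {Γ : SimpleGraph V} {M : Γ.Subgraph} (hM : M.IsPerfectMatching) :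
    Function.Injective (pmF hM) := by
  intro a b hab
  have := pmF_pmF hM a
  rw [hab, pmF_pmF hM b] at this
  exact this.symm

/-- Transfer a perfect matching along edge-containment of graphs. -/
lemma transfer_pm {G G' : SimpleGraph V} {M : G'.Subgraph} (hM : M.IsPerfectMatching)
    (h : ∀ a b, M.Adj a b → G.Adj a b) : ∃ N : G.Subgraph, N.IsPerfectMatching := by
  have hle : M.spanningCoe ≤ G := by
    intro a b hab
    exact h a b hab
  exact ⟨G.toSubgraph M.spanningCoe hle,
    (Subgraph.IsPerfectMatching.toSubgraph_iff hle).mpr hM⟩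

/-! ### The swap lemma -/

lemma swap_pm {G : SimpleGraph V} {x y v w : V} (hxy : x ≠ y) (hnadj : ¬G.Adj x y)
    {M : (G ⊔ edge x y).Subgraph} (hM : M.IsPerfectMatching) (hMxy : M.Adj x y)
    (hxv : G.Adj x v) (hyw : G.Adj y w) (hMvw : M.Adj v w) :
    ∃ N : G.Subgraph, N.IsPerfectMatching := by
  have hvx : v ≠ x := fun h => by simp [h] at hxv
  have hvy : v ≠ y := fun h => hnadj (h ▸ hxv)
  have hwy : w ≠ y := fun h => by simp [h] at hyw
  have hwx : w ≠ x := fun h => hnadj ((h ▸ hyw).symm)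
  have hvw : v ≠ w := hMvw.ne
  set s : Set V := {x, y, v, w} with hs
  -- partners of members of s stay in s
  have hclosed : ∀ z : V, z ∉ s → pmF hM z ∉ s := by
    intro z hz hzs
    have hadjz : M.Adj z (pmF hM z) := pmF_adj hM z
    have hzmem : z ∈ s := by
      rcases hzs with h | h | h | h
      · -- pmF z = x, so z = pmF x = y
        have : z = pmF hM x := eq_pmF hM (h ▸ hadjz).symm
        have hy' : y = pmF hM x := eq_pmF hM hMxy
        rw [this, ← hy']; right; left; rfl
      · have : z = pmF hM y := eq_pmF hM (h ▸ hadjz).symm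
        have hx' : x = pmF hM y := eq_pmF hM hMxy.symm
        rw [this, ← hx']; left; rfl
      · have : z = pmF hM v := eq_pmF hM (h ▸ hadjz).symm
        have hw' : w = pmF hM v := eq_pmF hM hMvw
        rw [this, ← hw']; right; right; right; rfl
      · have : z = pmF hM w := eq_pmF hM (h ▸ hadjz).symm
        have hv' : v = pmF hM w := eq_pmF hM hMvw.symm
        rw [this, ← hv']; right; right; left; rfl
    exact hz hzmem
  -- the matching with the four vertices deleted
  have hM' : (M.deleteVerts s).IsMatching := by
    intro z hz
    rw [Subgraph.deleteVerts_verts] at hz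
    obtain ⟨hzv, hzs⟩ := hz
    refine ⟨pmF hM z, ⟨?_, ?_⟩⟩
    · show (M.deleteVerts s).Adj z (pmF hM z)
      rw [Subgraph.deleteVerts_adj]
      exact ⟨hM.2 z, hzs, hM.2 _, hclosed z hzs, pmF_adj hM z⟩
    · intro q hq
      rw [Subgraph.deleteVerts_adj] at hq
      exact eq_pmF hM hq.2.2.2.2
  have hadj1 : (G ⊔ edge x y).Adj x v := Or.inl hxv
  have hadj2 : (G ⊔ edge x y).Adj y w := Or.inl hyw
  have hN1 : ((G ⊔ edge x y).subgraphOfAdj hadj1).IsMatching := IsMatching.subgraphOfAdj _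
  have hN2 : ((G ⊔ edge x y).subgraphOfAdj hadj2).IsMatching := IsMatching.subgraphOfAdj _
  have hd1 : Disjoint (M.deleteVerts s).support ((G ⊔ edge x y).subgraphOfAdj hadj1).support := by
    rw [hM'.support_eq_verts, hN1.support_eq_verts, Subgraph.deleteVerts_verts,
      subgraphOfAdj_verts]
    rw [Set.disjoint_left]
    rintro z ⟨_, hzs⟩ (rfl | rfl)
    · exact hzs (by left; rfl)
    · exact hzs (by right; right; left; rfl)
  have hMsup : ((M.deleteVerts s) ⊔ (G ⊔ edge x y).subgraphOfAdj hadj1).IsMatching :=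
    hM'.sup hN1 hd1
  have hd2 : Disjoint ((M.deleteVerts s) ⊔ (G ⊔ edge x y).subgraphOfAdj hadj1).support
      ((G ⊔ edge x y).subgraphOfAdj hadj2).support := by
    rw [hMsup.support_eq_verts, hN2.support_eq_verts, Subgraph.verts_sup,
      Subgraph.deleteVerts_verts, subgraphOfAdj_verts, subgraphOfAdj_verts]
    rw [Set.disjoint_left]
    rintro z (⟨_, hzs⟩ | (rfl | rfl)) hz2
    · rcases hz2 with rfl | rfl
      · exact hzs (by right; left; rfl)
      · exact hzs (by right; right; right; rfl)
    · rcases hz2 with h | h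
      · exact hxy h
      · exact hwx h.symm
    · rcases hz2 with h | h
      · exact hvy h
      · exact hvw h
  have hMfull : ((M.deleteVerts s) ⊔ (G ⊔ edge x y).subgraphOfAdj hadj1 ⊔
      (G ⊔ edge x y).subgraphOfAdj hadj2).IsMatching := hMsup.sup hN2 hd2
  have hspan : ((M.deleteVerts s) ⊔ (G ⊔ edge x y).subgraphOfAdj hadj1 ⊔
      (G ⊔ edge x y).subgraphOfAdj hadj2).IsSpanning := by
    intro z
    rw [Subgraph.verts_sup, Subgraph.verts_sup, Subgraph.deleteVerts_verts,
      subgraphOfAdj_verts, subgraphOfAdj_verts]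
    by_cases hz : z ∈ s
    · rcases hz with rfl | rfl | rfl | rfl
      · left; right; left; rfl
      · right; left; rfl
      · left; right; right; rfl
      · right; right; rfl
    · left; left; exact ⟨hM.2 z, hz⟩
  refine transfer_pm (M := (M.deleteVerts s) ⊔ (G ⊔ edge x y).subgraphOfAdj hadj1 ⊔
      (G ⊔ edge x y).subgraphOfAdj hadj2) ⟨hMfull, hspan⟩ ?_
  intro a b hab
  rcases hab with (hab | hab) | hab
  · rw [Subgraph.deleteVerts_adj] at hab
    obtain ⟨_, has, _, hbs, habM⟩ := hab
    have : (G ⊔ edge x y).Adj a b := M.adj_sub habM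
    rcases this with h | h
    · exact h
    · rw [edge_adj] at h
      rcases h.1 with ⟨rfl, rfl⟩ | ⟨rfl, rfl⟩
      · exact absurd (by left; rfl : a ∈ s) has
      · exact absurd (by right; left; rfl : a ∈ s) has
  · rw [subgraphOfAdj_adj] at hab
    rw [Sym2.eq_iff] at hab
    rcases hab with ⟨rfl, rfl⟩ | ⟨rfl, rfl⟩
    · exact hxv
    · exact hxv.symm
  · rw [subgraphOfAdj_adj] at hab
    rw [Sym2.eq_iff] at hab
    rcases hab with ⟨rfl, rfl⟩ | ⟨rfl, rfl⟩
    · exact hyw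
    · exact hyw.symm

/-! ### Degree bound in a maximal matching-free graph -/

lemma degBound {G : SimpleGraph V} [Fintype V] [DecidableEq V] [DecidableRel G.Adj]
    (hfree : G.IsMatchingFree)
    (hmax : ∀ G', G < G' → ∃ M : G'.Subgraph, M.IsPerfectMatching)
    {x y : V} (hne : x ≠ y) (hnadj : ¬G.Adj x y) :
    G.degree x + G.degree y + 2 ≤ Fintype.card V := by
  have hadjsup : (G ⊔ edge x y).Adj x y := Or.inr ((edge_adj x y x y).mpr ⟨Or.inl ⟨rfl, rfl⟩, hne⟩)
  have hlt : G < G ⊔ edge x y := by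
    refine lt_of_le_of_ne le_sup_left ?_
    intro h
    rw [← h] at hadjsup
    exact hnadj hadjsup
  obtain ⟨M, hM⟩ := hmax _ hlt
  have hMxy : M.Adj x y := by
    by_contra hMxy
    have hex : ∃ N : G.Subgraph, N.IsPerfectMatching := by
      refine transfer_pm hM (fun a b hab => ?_)
      rcases M.adj_sub hab with h | h
      · exact h
      · rw [edge_adj] at h
        rcases h.1 with ⟨rfl, rfl⟩ | ⟨rfl, rfl⟩
        · exact absurd hab hMxy
        · exact absurd hab.symm hMxy
    obtain ⟨N, hN⟩ := hex
    exact hfree N hN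
  set A : Finset V := G.neighborFinset x with hA
  set B : Finset V := (G.neighborFinset y).image (pmF hM) with hB
  have hdisj : Disjoint A B := by
    rw [Finset.disjoint_left]
    intro v hvA hvB
    rw [hA, mem_neighborFinset] at hvA
    rw [hB, Finset.mem_image] at hvB
    obtain ⟨u, hu, huv⟩ := hvB
    rw [mem_neighborFinset] at hu
    have hMvu : M.Adj v u := by
      rw [← huv]
      exact (pmF_adj hM u).symm
    obtain ⟨N, hN⟩ := swap_pm hne hnadj hM hMxy hvA hu hMvu
    exact hfree N hN
  have hcardA : A.card = G.degree x := rfl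
  have hcardB : B.card = G.degree y := by
    rw [hB, Finset.card_image_of_injective _ (pmF_injective hM)]
    rfl
  have hsub : A ∪ B ⊆ Finset.univ \ {x, y} := by
    intro z hz
    rw [Finset.mem_sdiff, Finset.mem_insert, Finset.mem_singleton]
    refine ⟨Finset.mem_univ z, ?_⟩
    rw [Finset.mem_union] at hz
    rintro (hzx | hzy)
    · rcases hz with hz | hz
      · rw [hA, mem_neighborFinset] at hz
        exact hz.ne hzx.symm
      · rw [hB, Finset.mem_image] at hz
        obtain ⟨u, hu, huz⟩ := hz
        rw [mem_neighborFinset] at hu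
        have hu1 : u = pmF hM z := by
          have h2 := pmF_pmF hM u
          rw [huz] at h2
          exact h2.symm
        have hy' : y = pmF hM x := eq_pmF hM hMxy
        have huy : u = y := by rw [hu1, hzx, ← hy']
        exact hu.ne huy.symm
    · rcases hz with hz | hz
      · rw [hA, mem_neighborFinset] at hz
        exact hnadj (hzy ▸ hz)
      · rw [hB, Finset.mem_image] at hz
        obtain ⟨u, hu, huz⟩ := hz
        rw [mem_neighborFinset] at hu
        have hu1 : u = pmF hM z := by
          have h2 := pmF_pmF hM u
          rw [huz] at h2
          exact h2.symm
        have hx' : x = pmF hM y := eq_pmF hM hMxy.symm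
        have hux : u = x := by rw [hu1, hzy, ← hx']
        exact hnadj ((hux ▸ hu).symm)
  have hcard2 : ({x, y} : Finset V).card = 2 := by
    rw [Finset.card_insert_of_notMem (by simpa using hne), Finset.card_singleton]
  have hn2 : 2 ≤ Fintype.card V := by
    calc 2 = ({x, y} : Finset V).card := hcard2.symm
    _ ≤ Finset.univ.card := Finset.card_le_card (Finset.subset_univ _)
    _ = Fintype.card V := Finset.card_univ
  have := Finset.card_le_card hsub
  rw [Finset.card_union_of_disjoint hdisj, hcardA, hcardB,
    Finset.card_sdiff_of_subset (Finset.subset_univ _), hcard2, Finset.card_univ] at this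
  omega

/-! ### The complete graph on an even number of vertices has a perfect matching -/

lemma top_pm [Fintype V] (h : Even (Fintype.card V)) :
    ∃ M : (⊤ : SimpleGraph V).Subgraph, M.IsPerfectMatching := by
  obtain ⟨k, hk⟩ := h
  have e : V ≃ (Fin k ⊕ Fin k) := by
    refine Fintype.equivOfCardEq ?_
    simp [hk, two_mul]
  set f : V → V := fun v => e.symm (Sum.swap (e v)) with hf
  have hff : ∀ v, f (f v) = v := by
    intro v
    simp [hf]
  have hfne : ∀ v, f v ≠ v := by
    intro v h
    have : Sum.swap (e v) = e v := by
      have := congrArg e h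
      simpa [hf] using this
    rcases hl : e v with a | a <;> rw [hl] at this <;> simp at this
  refine ⟨⟨Set.univ, fun a b => a ≠ b ∧ (f a = b ∨ f b = a), ?_, ?_, ?_⟩, ?_, fun v => trivial⟩
  · intro a b hab
    exact hab.1
  · intro a b _
    trivial
  · exact ⟨fun a b hab => ⟨hab.1.symm, hab.2.symm⟩⟩
  · intro v _
    refine ⟨f v, ⟨(hfne v).symm, Or.inl rfl⟩, ?_⟩
    rintro y ⟨hne, (rfl | rfl)⟩
    rfl
    · exact (hff y).symm

/-! ### Double counting: degree sum over a subset -/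

lemma sum_deg_le {H : SimpleGraph V} [Fintype V] [DecidableEq V] [DecidableRel H.Adj]
    (S : Finset V) :
    2 * ∑ v ∈ S, H.degree v ≤ 2 * H.edgeFinset.card + S.card * (S.card - 1) := by
  have hsplit : ∀ v : V, H.degree v =
      (H.neighborFinset v ∩ S).card + (H.neighborFinset v \ S).card := by
    intro v
    rw [Finset.card_inter_add_card_sdiff]
    rfl
  have h1 : ∑ v ∈ S, (H.neighborFinset v ∩ S).card ≤ S.card * (S.card - 1) := by
    calc ∑ v ∈ S, (H.neighborFinset v ∩ S).card
        ≤ ∑ _v ∈ S, (S.card - 1) := by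
          refine Finset.sum_le_sum fun v hv => ?_
          have hsub : H.neighborFinset v ∩ S ⊆ S.erase v := by
            intro w hw
            rw [Finset.mem_inter, mem_neighborFinset] at hw
            exact Finset.mem_erase.mpr ⟨hw.1.ne', hw.2⟩
          calc (H.neighborFinset v ∩ S).card ≤ (S.erase v).card := Finset.card_le_card hsub
          _ = S.card - 1 := Finset.card_erase_of_mem hv
      _ = S.card * (S.card - 1) := by rw [Finset.sum_const, smul_eq_mul]
  have h2 : ∑ v ∈ S, (H.neighborFinset v \ S).card
      = ∑ w ∈ Finset.univ \ S, (H.neighborFinset w ∩ S).card := by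
    have hL : ∀ v : V, (H.neighborFinset v \ S) = (Finset.univ \ S).filter (H.Adj v) := by
      intro v
      ext w
      simp only [Finset.mem_sdiff, mem_neighborFinset, Finset.mem_filter, Finset.mem_univ,
        true_and]
      tauto
    have hR : ∀ w : V, (H.neighborFinset w ∩ S) = S.filter (fun v => H.Adj v w) := by
      intro w
      ext v
      simp only [Finset.mem_inter, mem_neighborFinset, Finset.mem_filter]
      constructor
      · rintro ⟨h, hv⟩
        exact ⟨hv, h.symm⟩
      · rintro ⟨hv, h⟩
        exact ⟨h.symm, hv⟩
    simp_rw [hL, hR, Finset.card_filter]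
    rw [Finset.sum_comm]
  have h3 : ∑ w ∈ Finset.univ \ S, (H.neighborFinset w ∩ S).card
      ≤ ∑ w ∈ Finset.univ \ S, H.degree w := by
    refine Finset.sum_le_sum fun w _ => ?_
    exact Finset.card_le_card Finset.inter_subset_left
  have h4 : ∑ v ∈ S, H.degree v + ∑ w ∈ Finset.univ \ S, H.degree w
      = 2 * H.edgeFinset.card := by
    rw [← H.sum_degrees_eq_twice_card_edges]
    rw [add_comm, Finset.sum_sdiff (Finset.subset_univ S)]
  have h5 : ∑ v ∈ S, H.degree v
      = ∑ v ∈ S, (H.neighborFinset v ∩ S).card + ∑ v ∈ S, (H.neighborFinset v \ S).card := by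
    rw [← Finset.sum_add_distrib]
    exact Finset.sum_congr rfl fun v _ => hsplit v
  omega

/-! ### choose 2 arithmetic -/

lemma two_mul_choose_two (n : ℕ) : 2 * n.choose 2 = n * (n - 1) := by
  rw [Nat.choose_two_right]
  refine Nat.mul_div_cancel' ?_
  rcases n with _ | m
  · simp
  · have := (Nat.even_mul_succ_self m).two_dvd
    simpa [Nat.succ_sub_one, mul_comm] using this

end OEdgeAux

open OEdgeAux in
set_option maxHeartbeats 1600000 in
theorem o_edge_condition_perfect_matching {V : Type*} [Fintype V] (G : SimpleGraph V)
    (n : ℕ) (hn : n = Fintype.card V) (hconn : G.Connected) (heven : Even n)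
    (hn' : n ≥ 10 ∨ n = 4) (h : Nat.card G.edgeSet > (n - 2).choose 2 + 2) :
    ∃ M : G.Subgraph, M.IsPerfectMatching := by
  classical
  by_contra h0
  rw [not_exists] at h0
  have hfree : G.IsMatchingFree := fun M hM => h0 M hM
  obtain ⟨Gm, hle, hfreem, hmax⟩ := exists_maximal_isMatchingFree hfree
  set H := Gmᶜ with hH
  have n4 : 4 ≤ n := by rcases hn' with h' | h' <;> omega
  have ncard : Fintype.card V = n := hn.symm
  -- minimum degree of Gm is at least 1
  have hd1 : ∀ v : V, 1 ≤ Gm.degree v := by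
    intro v
    have : Nontrivial V := Fintype.one_lt_card_iff_nontrivial.mp (by omega)
    obtain ⟨u, hu⟩ := exists_ne v
    have hr : G.Reachable v u := hconn.preconnected v u
    obtain ⟨p⟩ := hr
    rcases p with _ | ⟨hadj, q⟩
    · exact absurd rfl hu.symm
    · exact (Gm.degree_pos_iff_exists_adj v).mpr ⟨_, hle hadj⟩
  -- Gm is not complete
  have hGmtop : Gm ≠ ⊤ := by
    intro htop
    obtain ⟨M, hM⟩ := top_pm (V := V) (by rw [ncard]; exact heven)
    rw [htop] at hfreem
    exact hfreem M hM
  -- H has an edge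
  have hHedge : ∃ x y, H.Adj x y := by
    by_contra hne
    push_neg at hne
    have : H = ⊥ := by
      ext a b
      simp [hne a b]
    apply hGmtop
    calc Gm = Hᶜ := by rw [hH, compl_compl]
    _ = ⊤ := by rw [this, compl_bot]
  -- degree relations
  have hHdeg : ∀ v, H.degree v = n - 1 - Gm.degree v := by
    intro v
    show Gmᶜ.degree v = n - 1 - Gm.degree v
    rw [Gm.degree_compl, ncard]
  have hGmlt : ∀ v, Gm.degree v < n := by
    intro v
    rw [← ncard]
    exact Gm.degree_lt_card_verts v
  have hHmax : ∀ v, H.degree v ≤ n - 2 := by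
    intro v
    have := hd1 v
    have := hGmlt v
    rw [hHdeg v]
    omega
  -- local condition on H edges
  have hloc : ∀ x y, H.Adj x y → n ≤ H.degree x + H.degree y := by
    intro x y hxy
    rw [hH, compl_adj] at hxy
    have hb := degBound hfreem (fun G' h' => hmax G' h') hxy.1 hxy.2
    rw [ncard] at hb
    have h1 := hGmlt x
    have h2 := hGmlt y
    rw [hHdeg x, hHdeg y]
    omega
  -- edge counts
  have hcompl : Gm ⊔ H = ⊤ := by
    rw [hH]
    exact sup_compl_eq_top
  have hdisjGH : Disjoint Gm.edgeFinset H.edgeFinset := by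
    rw [SimpleGraph.disjoint_edgeFinset, hH]
    exact disjoint_compl_right
  have hsumedge : Gm.edgeFinset.card + H.edgeFinset.card = n.choose 2 := by
    rw [← Finset.card_union_of_disjoint hdisjGH, ← SimpleGraph.edgeFinset_sup]
    have : (Gm ⊔ H).edgeFinset = (⊤ : SimpleGraph V).edgeFinset := by
      rw [SimpleGraph.edgeFinset_inj]
      exact hcompl
    rw [this, SimpleGraph.card_edgeFinset_top_eq_card_choose_two, ncard]
  have hGedges : (n - 2).choose 2 + 3 ≤ G.edgeFinset.card := by
    have : Nat.card G.edgeSet = G.edgeFinset.card := by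
      rw [SimpleGraph.edgeFinset_card, Nat.card_eq_fintype_card]
    omega
  have hGle : G.edgeFinset.card ≤ Gm.edgeFinset.card :=
    Finset.card_le_card (SimpleGraph.edgeFinset_mono hle)
  have hchoosen : 2 * n.choose 2 = n * (n - 1) := two_mul_choose_two n
  have hchoosen2 : 2 * (n - 2).choose 2 = (n - 2) * (n - 3) := two_mul_choose_two (n - 2)
  have hkey : n * (n - 1) = (n - 2) * (n - 3) + (4 * n - 6) := by
    zify [show 1 ≤ n by omega, show 2 ≤ n by omega, show 3 ≤ n by omega,
      show 6 ≤ 4 * n by omega]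
    ring
  set m := H.edgeFinset.card with hm
  have hmle : 2 * m ≤ 4 * n - 12 := by omega
  -- hub set
  set B : Finset V := Finset.univ.filter (fun v => n ≤ 2 * H.degree v) with hB
  set k := B.card with hk
  clear_value k B m
  have hsumdeg : ∑ v, H.degree v = 2 * m := by
    rw [hm]; exact H.sum_degrees_eq_twice_card_edges
  obtain ⟨x0, y0, hxy0⟩ := hHedge
  have hBne : B.Nonempty := by
    have := hloc x0 y0 hxy0
    rcases Nat.le_or_le (2 * H.degree x0) (2 * H.degree y0) with hc | hc
    · exact ⟨y0, by rw [hB]; simp only [Finset.mem_filter, Finset.mem_univ, true_and]; omega⟩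
    · exact ⟨x0, by rw [hB]; simp only [Finset.mem_filter, Finset.mem_univ, true_and]; omega⟩
  have hk1 : 1 ≤ k := by
    rw [hk]; exact Finset.card_pos.mpr hBne
  rcases le_or_gt (2 * k) n with hsmall | hbig
  · -- small hub set: every hub has degree ≥ n - k
    have hhub : ∀ x ∈ B, n - k ≤ H.degree x := by
      intro x hxB
      have hxhub : n ≤ 2 * H.degree x := by
        have := hxB
        rw [hB, Finset.mem_filter] at this
        exact this.2
      -- x has a non-hub neighbor
      have hz : ∃ z, H.Adj x z ∧ z ∉ B := by
        by_contra hall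
        push_neg at hall
        have hsub : H.neighborFinset x ⊆ B.erase x := by
          intro w hw
          rw [mem_neighborFinset] at hw
          exact Finset.mem_erase.mpr ⟨hw.ne', hall w hw⟩
        have hbc : H.degree x ≤ B.card - 1 := by
          calc H.degree x ≤ (B.erase x).card := Finset.card_le_card hsub
          _ = B.card - 1 := Finset.card_erase_of_mem hxB
        have hkB : k = B.card := hk
        omega
      obtain ⟨z, hxz, hzB⟩ := hz
      -- all neighbors of z are hubs
      have hznb : H.neighborFinset z ⊆ B := by
        intro w hw
        rw [mem_neighborFinset] at hw
        rw [hB, Finset.mem_filter]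
        refine ⟨Finset.mem_univ w, ?_⟩
        by_contra hwB
        push_neg at hwB
        have hzB' : ¬ n ≤ 2 * H.degree z := by
          intro hc
          apply hzB
          rw [hB, Finset.mem_filter]
          exact ⟨Finset.mem_univ z, hc⟩
        have := hloc z w hw
        omega
      have hzk : H.degree z ≤ k := by
        calc H.degree z ≤ B.card := Finset.card_le_card hznb
        _ = k := hk.symm
      have := hloc x z hxz
      omega
    -- k ≥ 2
    have hk2 : 2 ≤ k := by
      obtain ⟨x0', hx0'⟩ := hBne
      have h1 := hhub x0' hx0'
      have h2 := hHmax x0'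
      omega
    -- sum bound
    have hsumB : k * (n - k) ≤ ∑ v ∈ B, H.degree v := by
      calc k * (n - k) = B.card • (n - k) := by rw [smul_eq_mul, hk]
      _ ≤ ∑ v ∈ B, H.degree v := Finset.card_nsmul_le_sum B _ _ hhub
    have hDC := sum_deg_le (H := H) B
    rw [← hm, ← hk] at hDC
    -- 2 * k * (n - k) ≤ 2 * m + k * (k - 1) ≤ 4n - 12 + k * (k-1)
    have hfinal : 2 * (k * (n - k)) ≤ (4 * n - 12) + k * (k - 1) := by omega
    -- contradiction by arithmetic
    rcases hn' with h10 | h4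
    · -- n ≥ 10 : 3k ≤ 2n - 5 hence (k-2)(2n-5-3k) ≥ 0 gives contradiction
      have hkn : k ≤ n := by omega
      zify [show k ≤ n by omega, show 12 ≤ 4 * n by omega, show 1 ≤ k by omega] at hfinal
      have e1 : (0 : ℤ) ≤ (k : ℤ) - 2 := by omega
      have e2 : (0 : ℤ) ≤ 2 * (n : ℤ) - 5 - 3 * k := by omega
      nlinarith [mul_nonneg e1 e2]
    · -- n = 4 : then k = 2 and the inequality is 8 ≤ 2m + 2 with m ≤ 2
      subst h4
      have hk2' : k = 2 := by omega
      rw [hk2'] at hfinal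
      omega
  · -- big hub set: 2k ≥ n + 2 by parity
    obtain ⟨t, ht⟩ := heven
    have hbig2 : n + 2 ≤ 2 * k := by omega
    have hsumB : k * n ≤ ∑ v ∈ B, 2 * H.degree v := by
      calc k * n = B.card • n := by rw [smul_eq_mul, hk]
      _ ≤ ∑ v ∈ B, 2 * H.degree v := by
          refine Finset.card_nsmul_le_sum B _ _ ?_
          intro v hv
          rw [hB, Finset.mem_filter] at hv
          exact hv.2
    have hsum2 : ∑ v ∈ B, 2 * H.degree v ≤ ∑ v, 2 * H.degree v := by
      refine Finset.sum_le_sum_of_subset (Finset.subset_univ B)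
    have hsum3 : ∑ v, 2 * H.degree v = 4 * m := by
      rw [← Finset.mul_sum, hsumdeg]
      ring
    have hkn : k * n ≤ 4 * m := by omega
    -- k*n ≥ (n+2)/2 * n, 4m ≤ 8n - 24
    have hnn : (n + 2) * n ≤ 2 * (4 * m) := by
      calc (n + 2) * n ≤ (2 * k) * n := by
            exact Nat.mul_le_mul_right n hbig2
      _ = 2 * (k * n) := by ring
      _ ≤ 2 * (4 * m) := by omega
    rcases hn' with h10 | h4
    · have hq : (n + 2) * n + 48 ≤ 16 * n := by omega
      have hz : ((n : ℤ) + 2) * n + 48 ≤ 16 * n := by exact_mod_cast hq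
      have h10z : (10 : ℤ) ≤ (n : ℤ) := by exact_mod_cast h10
      nlinarith [mul_nonneg (by linarith : (0:ℤ) ≤ (n:ℤ) - 10) (by linarith : (0:ℤ) ≤ (n:ℤ) - 4)]
    · subst h4
      omega
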